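/- Soundness of existential reduction for cubes: let Π.ψ be a PCNF and C ∪ {l} a non-contradictory cube that is an implicant of ψ extended validly (i.e., Π.ψ is satisfiability-equivalent to Π.(ψ ∨ (C ∪ {l}))), where l is existential in Π and every universal literal l' of C satisfies l' <_Π l. Then Π.ψ is satisfiability-equivalent to Π.(ψ ∨ C). -/

import Mathlib

/-- Variables are natural numbers. -/
abbrev Var := ℕ

/-- A literal is a variable together with a polarity. -/
abbrev Lit := Var × Bool

/-- Negation of a literal. -/
def Lit.negate (l : Lit) : Lit := (l.1, !l.2)

/-- A clause is a finite set of literals (interpreted disjunctively). -/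
abbrev Clause := Finset Lit

/-- A cube is a finite set of literals (interpreted conjunctively). -/
abbrev Cube := Finset Lit

/-- A CNF is a finite set of clauses. -/
abbrev Cnf := Finset Clause

/-- An assignment is a finite set of literals. -/
abbrev Assignment := Finset Lit

/-- An assignment contains no complementary pair of literals. -/
def Assignment.consistent (A : Assignment) : Prop := ∀ l ∈ A, Lit.negate l ∉ A

/-- A total assignment satisfies a literal. -/
def litSat (σ : Var → Bool) (l : Lit) : Prop := σ l.1 = l.2

/-- A total assignment satisfies a clause. -/
def clauseSat (σ : Var → Bool) (C : Clause) : Prop := ∃ l ∈ C, litSat σ l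

/-- A total assignment satisfies a CNF (is a propositional model). -/
def cnfSat (σ : Var → Bool) (ψ : Cnf) : Prop := ∀ C ∈ ψ, clauseSat σ C

/-- A total assignment satisfies a cube. -/
def cubeSat (σ : Var → Bool) (D : Cube) : Prop := ∀ l ∈ D, litSat σ l

/-- Restriction of a clause by an assignment: delete falsified literals. -/
def Clause.restrict (C : Clause) (A : Assignment) : Clause :=
  C.filter (fun l => Lit.negate l ∉ A)

/-- Restriction ψ[A] of a CNF by an assignment: remove satisfied clauses and
delete falsified literals from the remaining clauses. -/
def Cnf.restrict (ψ : Cnf) (A : Assignment) : Cnf :=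
  (ψ.filter (fun C => ∀ l ∈ A, l ∉ C)).image (fun C => Clause.restrict C A)

/-- Quantifiers. -/
inductive Quant | ex | all
deriving DecidableEq

/-- A quantifier prefix: a list of quantified variables (outermost first). -/
abbrev QPrefix := List (Quant × Var)

/-- Restriction of a prefix by an assignment: remove assigned variables. -/
def QPrefix.restrict (pre : QPrefix) (A : Assignment) : QPrefix :=
  pre.filter (fun q => q.2 ∉ A.image Prod.fst)

/-- Satisfiability of the PCNF `pre.ψ`, defined recursively over the prefix:
an existential variable needs one satisfiable branch, a universal variable
both; a quantifier-free CNF is satisfiable iff it is propositionally true. -/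
def qbfSat : QPrefix → Cnf → Prop
  | [], ψ => ∃ σ : Var → Bool, cnfSat σ ψ
  | (Quant.ex, x) :: pre, ψ =>
      qbfSat pre (Cnf.restrict ψ {(x, true)}) ∨ qbfSat pre (Cnf.restrict ψ {(x, false)})
  | (Quant.all, x) :: pre, ψ =>
      qbfSat pre (Cnf.restrict ψ {(x, true)}) ∧ qbfSat pre (Cnf.restrict ψ {(x, false)})

/-- Restriction of a set of cubes (disjunctively added to the matrix) by an
assignment: remove falsified cubes and delete satisfied literals. -/
def Cube.restrictSet (Ds : Finset Cube) (A : Assignment) : Finset Cube :=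
  (Ds.filter (fun D => ∀ l ∈ D, Lit.negate l ∉ A)).image (fun D => D.filter (fun l => l ∉ A))

/-- Satisfiability of the QBF `pre.(ψ ∨ D₁ ∨ … ∨ Dₙ)` whose matrix is a CNF
together with disjunctively added cubes. -/
def qbfSatCubes : QPrefix → Cnf → Finset Cube → Prop
  | [], ψ, Ds => ∃ σ : Var → Bool, cnfSat σ ψ ∨ ∃ D ∈ Ds, cubeSat σ D
  | (Quant.ex, x) :: pre, ψ, Ds =>
      qbfSatCubes pre (Cnf.restrict ψ {(x, true)}) (Cube.restrictSet Ds {(x, true)}) ∨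
      qbfSatCubes pre (Cnf.restrict ψ {(x, false)}) (Cube.restrictSet Ds {(x, false)})
  | (Quant.all, x) :: pre, ψ, Ds =>
      qbfSatCubes pre (Cnf.restrict ψ {(x, true)}) (Cube.restrictSet Ds {(x, true)}) ∧
      qbfSatCubes pre (Cnf.restrict ψ {(x, false)}) (Cube.restrictSet Ds {(x, false)})

/-- `x` is quantified before (outer to) `y` in the prefix. -/
def before (pre : QPrefix) (x y : Var) : Prop :=
  ∃ i j : Fin pre.length, (i : ℕ) < (j : ℕ) ∧ (pre.get i).2 = x ∧ (pre.get j).2 = y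

lemma restrictSet_singleton (D : Cube) (A : Assignment) :
    Cube.restrictSet ({D} : Finset Cube) A =
      if ∀ l ∈ D, Lit.negate l ∉ A then {D.filter (fun l => l ∉ A)} else ∅ := by
  unfold Cube.restrictSet
  rw [Finset.filter_singleton]
  split_ifs <;> simp

lemma restrictSet_unchanged (D : Cube) (x : Var) (b : Bool)
    (h : ∀ m ∈ D, m.1 ≠ x) :
    Cube.restrictSet ({D} : Finset Cube) {(x,b)} = {D} := by
  rw [restrictSet_singleton]
  rw [if_pos]
  · congr 1
    apply Finset.filter_true_of_mem
    intro m hm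
    simp only [Finset.mem_singleton]
    intro he; exact (h m hm) (by rw [he])
  · intro m hm
    simp only [Finset.mem_singleton, Lit.negate]
    intro he
    exact h m hm (congrArg Prod.fst he)

lemma restrictSet_erase (D : Cube) (x : Var) (c : Bool)
    (hmem : (x,c) ∈ D)
    (hcons : ∀ m ∈ D, Lit.negate m ∉ D) :
    Cube.restrictSet ({D} : Finset Cube) {(x,c)} = {D.erase (x,c)} := by
  rw [restrictSet_singleton, if_pos]
  · congr 1
    ext m; simp [Finset.mem_erase, and_comm]
  · intro m hm
    simp only [Finset.mem_singleton, Lit.negate]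
    intro he
    have hm1 : m = (x, !c) := by
      have h1 : m.1 = x := congrArg Prod.fst he
      have h2 : (!m.2) = c := congrArg Prod.snd he
      have : m.2 = !c := by rw [← h2, Bool.not_not]
      exact Prod.ext h1 this
    subst hm1
    have := hcons _ hm
    simp [Lit.negate] at this
    exact this hmem

lemma restrictSet_dead (D : Cube) (x : Var) (b : Bool)
    (hmem : (x, !b) ∈ D) :
    Cube.restrictSet ({D} : Finset Cube) {(x,b)} = ∅ := by
  rw [restrictSet_singleton, if_neg]
  push_neg
  exact ⟨(x, !b), hmem, by simp [Lit.negate]⟩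

lemma qbfSat_mono : ∀ (pre : QPrefix) (ψ : Cnf) (Ds : Finset Cube),
    qbfSat pre ψ → qbfSatCubes pre ψ Ds := by
  intro pre
  induction pre with
  | nil => intro ψ Ds ⟨σ, hσ⟩; exact ⟨σ, Or.inl hσ⟩
  | cons p pre ih =>
    intro ψ Ds h
    obtain ⟨q, x⟩ := p
    cases q with
    | ex =>
      rcases h with h | h
      · exact Or.inl (ih _ _ h)
      · exact Or.inr (ih _ _ h)
    | all => exact ⟨ih _ _ h.1, ih _ _ h.2⟩

lemma cube_force : ∀ (pre : QPrefix) (ψ : Cnf) (D : Cube),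
    (pre.map Prod.snd).Nodup →
    (∀ m ∈ D, Lit.negate m ∉ D) →
    (∀ m ∈ D, (Quant.ex, m.1) ∈ pre) →
    qbfSatCubes pre ψ {D} := by
  intro pre
  induction pre with
  | nil =>
    intro ψ D _ hcons hex
    refine ⟨fun v => decide ((v, true) ∈ D), Or.inr ⟨D, Finset.mem_singleton_self D, ?_⟩⟩
    intro m hm
    unfold litSat
    cases hb : m.2 with
    | true =>
      simp only [decide_eq_true_eq]
      have : m = (m.1, true) := Prod.ext rfl hb
      rwa [← this]
    | false =>
      simp only [decide_eq_false_iff_not]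
      have := hcons m hm
      simp only [Lit.negate, hb, Bool.not_false] at this
      exact this
  | cons p pre ih =>
    intro ψ D hnodup hcons hex
    obtain ⟨q, x⟩ := p
    have hnodup' : (pre.map Prod.snd).Nodup := by
      simp only [List.map_cons, List.nodup_cons] at hnodup
      exact hnodup.2
    have hxnotin : x ∉ pre.map Prod.snd := by
      simp only [List.map_cons, List.nodup_cons] at hnodup
      exact hnodup.1
    -- key: if m ∈ D and m.1 = x then the quantifier of x is ex
    have hkey : ∀ m ∈ D, m.1 = x → q = Quant.ex := by
      intro m hm hmx
      have := hex m hm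
      rw [hmx] at this
      rcases List.mem_cons.mp this with h | h
      · exact ((Prod.ext_iff.mp h).1).symm
      · exact absurd (List.mem_map.mpr ⟨_, h, rfl⟩) hxnotin
    cases q with
    | all =>
      have hne : ∀ m ∈ D, m.1 ≠ x := fun m hm hx => by
        exact absurd (hkey m hm hx) (by simp)
      have hextail : ∀ m ∈ D, (Quant.ex, m.1) ∈ pre := by
        intro m hm
        rcases List.mem_cons.mp (hex m hm) with h | h
        · exact absurd h (by simp)
        · exact h
      constructor <;>
      · rw [restrictSet_unchanged _ _ _ hne]
        exact ih _ _ hnodup' hcons hextail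
    | ex =>
      by_cases hc : ∃ c, (x, c) ∈ D
      · obtain ⟨c, hcD⟩ := hc
        have hrest := restrictSet_erase D x c hcD hcons
        have hgoal : qbfSatCubes pre (Cnf.restrict ψ {(x,c)}) (Cube.restrictSet {D} {(x,c)}) := by
          rw [hrest]
          apply ih _ _ hnodup'
          · intro m hm
            have hm' := Finset.mem_of_mem_erase hm
            intro hneg
            exact hcons m hm' (Finset.mem_of_mem_erase hneg)
          · intro m hm
            have hm' := Finset.mem_of_mem_erase hm
            have hmne : m ≠ (x, c) := Finset.ne_of_mem_erase hm
            have hmx : m.1 ≠ x := by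
              intro hx
              have : m = (x, m.2) := Prod.ext hx rfl
              cases hb : m.2 with
              | true =>
                cases c with
                | true => exact hmne (by rw [this, hb])
                | false =>
                  have := hcons (x, false) hcD
                  simp only [Lit.negate, Bool.not_false] at this
                  exact this (by rw [← show m = (x,true) by rw [‹m = (x, m.2)›, hb]]; exact hm')
              | false =>
                cases c with
                | false => exact hmne (by rw [this, hb])
                | true =>
                  have := hcons (x, true) hcD
                  simp only [Lit.negate, Bool.not_true] at this
                  exact this (by rw [← show m = (x,false) by rw [‹m = (x, m.2)›, hb]]; exact hm')
            rcases List.mem_cons.mp (hex m hm') with h | h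
            · exact absurd ((Prod.ext_iff.mp h).2) hmx
            · exact h
        cases c with
        | true => exact Or.inl hgoal
        | false => exact Or.inr hgoal
      · push_neg at hc
        have hne : ∀ m ∈ D, m.1 ≠ x := by
          intro m hm hx
          have : m = (x, m.2) := Prod.ext hx rfl
          exact hc m.2 (this ▸ hm)
        have hextail : ∀ m ∈ D, (Quant.ex, m.1) ∈ pre := by
          intro m hm
          rcases List.mem_cons.mp (hex m hm) with h | h
          · exact absurd ((Prod.ext_iff.mp h).2) (hne m hm)
          · exact h
        left
        rw [restrictSet_unchanged _ _ _ hne]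
        exact ih _ _ hnodup' hcons hextail

lemma before_tail {p : Quant × Var} {pre : QPrefix} {a b : Var} (ha : a ≠ p.2) :
    before (p :: pre) a b → before pre a b := by
  rintro ⟨i, j, hij, hi, hj⟩
  have hi0 : (i : ℕ) ≠ 0 := by
    intro h
    apply ha
    rw [← hi]
    have : i = (⟨0, Nat.succ_pos _⟩ : Fin (p :: pre).length) := Fin.ext h
    rw [this]
    rfl
  obtain ⟨ki, hki⟩ : ∃ k, (i : ℕ) = k + 1 := ⟨(i:ℕ)-1, by omega⟩
  obtain ⟨kj, hkj⟩ : ∃ k, (j : ℕ) = k + 1 := ⟨(j:ℕ)-1, by omega⟩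
  have hilen : ki < pre.length := by
    have := i.isLt; simp only [List.length_cons] at this; omega
  have hjlen : kj < pre.length := by
    have := j.isLt; simp only [List.length_cons] at this; omega
  have hgi : (p :: pre).get i = pre.get ⟨ki, hilen⟩ := by
    have : i = (⟨ki + 1, by simpa using Nat.succ_lt_succ hilen⟩ : Fin (p :: pre).length) :=
      Fin.ext hki
    rw [this]
    rfl
  have hgj : (p :: pre).get j = pre.get ⟨kj, hjlen⟩ := by
    have : j = (⟨kj + 1, by simpa using Nat.succ_lt_succ hjlen⟩ : Fin (p :: pre).length) :=
      Fin.ext hkj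
    rw [this]
    rfl
  exact ⟨⟨ki, hilen⟩, ⟨kj, hjlen⟩, by simp; omega, by rw [← hgi]; exact hi,
    by rw [← hgj]; exact hj⟩

lemma not_before_head {q : Quant} {y : Var} {pre : QPrefix} {a : Var}
    (hnotin : y ∉ pre.map Prod.snd) :
    ¬ before ((q, y) :: pre) a y := by
  rintro ⟨i, j, hij, hi, hj⟩
  have hj0 : (j : ℕ) ≠ 0 := by omega
  apply hnotin
  obtain ⟨kj, hkj⟩ : ∃ k, (j : ℕ) = k + 1 := ⟨(j:ℕ)-1, by omega⟩
  have hjlen : kj < pre.length := by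
    have := j.isLt; simp only [List.length_cons] at this; omega
  have hgj : ((q, y) :: pre).get j = pre.get ⟨kj, hjlen⟩ := by
    have : j = (⟨kj + 1, by simpa using Nat.succ_lt_succ hjlen⟩ : Fin ((q, y) :: pre).length) :=
      Fin.ext hkj
    rw [this]
    rfl
  rw [hgj] at hj
  exact List.mem_map.mpr ⟨_, pre.get_mem ⟨kj, hjlen⟩, hj⟩

lemma reduce_sound (l : Lit) : ∀ (pre : QPrefix) (ψ : Cnf) (C : Cube),
    (pre.map Prod.snd).Nodup →
    l ∉ C →
    (∀ m ∈ insert l C, Lit.negate m ∉ insert l C) →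
    (Quant.ex, l.1) ∈ pre →
    (∀ m ∈ C, ∃ q, (q, m.1) ∈ pre) →
    (∀ m ∈ C, (Quant.all, m.1) ∈ pre → before pre m.1 l.1) →
    qbfSatCubes pre ψ {C} → qbfSatCubes pre ψ {insert l C} := by
  intro pre
  induction pre with
  | nil =>
    intro ψ C _ _ _ hex _ _ _
    exact absurd hex List.not_mem_nil
  | cons p pre ih =>
    intro ψ C hnodup hlC hnoncon hex hvars horder h
    obtain ⟨q, x⟩ := p
    have hnodup' : (pre.map Prod.snd).Nodup := by
      simp only [List.map_cons, List.nodup_cons] at hnodup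
      exact hnodup.2
    have hxnotin : x ∉ pre.map Prod.snd := by
      simp only [List.map_cons, List.nodup_cons] at hnodup
      exact hnodup.1
    have hconsC : ∀ m ∈ C, Lit.negate m ∉ C := fun m hm hn =>
      hnoncon m (Finset.mem_insert_of_mem hm) (Finset.mem_insert_of_mem hn)
    have hconsI : ∀ m ∈ insert l C, Lit.negate m ∉ insert l C := hnoncon
    have hCvar : ∀ m ∈ C, m.1 ≠ l.1 := by
      intro m hm hml
      have hme : m = (l.1, m.2) := Prod.ext hml rfl
      by_cases hm2 : m.2 = l.2
      · apply hlC
        rw [← show m = l from Prod.ext hml hm2]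
        exact hm
      · have hm2' : m.2 = !l.2 := Bool.eq_not_of_ne hm2
        have : m = Lit.negate l := by
          simp only [Lit.negate]
          exact Prod.ext hml hm2'
        apply hnoncon l (Finset.mem_insert_self l C)
        rw [← this]
        exact Finset.mem_insert_of_mem hm
    by_cases hxl : x = l.1
    · subst hxl
      have hq : q = Quant.ex := by
        rcases List.mem_cons.mp hex with hh | ht
        · exact ((Prod.ext_iff.mp hh).1).symm
        · exact absurd (List.mem_map.mpr ⟨_, ht, rfl⟩) hxnotin
      subst hq
      have hexC : ∀ m ∈ C, (Quant.ex, m.1) ∈ pre := by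
        intro m hm
        obtain ⟨q', hq'⟩ := hvars m hm
        have hq't : (q', m.1) ∈ pre := by
          rcases List.mem_cons.mp hq' with hh | ht
          · exact absurd (Prod.ext_iff.mp hh).2 (hCvar m hm)
          · exact ht
        cases q' with
        | ex => exact hq't
        | all =>
          exact absurd (horder m hm (List.mem_cons_of_mem _ hq't))
            (not_before_head hxnotin)
      have hforce : ∀ b, qbfSatCubes pre (Cnf.restrict ψ {(l.1, b)}) {C} :=
        fun b => cube_force pre _ C hnodup' hconsC hexC
      have hlmem : (l.1, l.2) ∈ insert l C := by
        rw [show ((l.1, l.2) : Lit) = l from Prod.mk.eta]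
        exact Finset.mem_insert_self l C
      have hrest : Cube.restrictSet {insert l C} {(l.1, l.2)} = {C} := by
        rw [restrictSet_erase _ _ _ hlmem hconsI,
          show ((l.1, l.2) : Lit) = l from Prod.mk.eta, Finset.erase_insert hlC]
      cases hl2 : l.2 with
      | true =>
        left
        rw [hl2] at hrest
        rw [hrest]
        exact hforce true
      | false =>
        right
        rw [hl2] at hrest
        rw [hrest]
        exact hforce false
    · -- x ≠ l.1
      have hexpre : (Quant.ex, l.1) ∈ pre := by
        rcases List.mem_cons.mp hex with hh | ht
        · exact absurd ((Prod.ext_iff.mp hh).2).symm hxl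
        · exact ht
      have trans : ∀ b, qbfSatCubes pre (Cnf.restrict ψ {(x, b)})
            (Cube.restrictSet {C} {(x, b)}) →
          qbfSatCubes pre (Cnf.restrict ψ {(x, b)})
            (Cube.restrictSet {insert l C} {(x, b)}) := by
        intro b hyp
        by_cases h1 : (x, b) ∈ C
        · -- cube alive, literal erased
          have hlne' : l ≠ (x, b) := fun he => hxl ((congrArg Prod.fst he).symm)
          rw [restrictSet_erase C x b h1 hconsC] at hyp
          rw [restrictSet_erase (insert l C) x b (Finset.mem_insert_of_mem h1) hconsI,
            Finset.erase_insert_of_ne hlne']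
          apply ih (Cnf.restrict ψ {(x, b)}) (C.erase (x, b)) hnodup'
          · intro hc; exact hlC (Finset.mem_of_mem_erase hc)
          · intro m hm hn
            apply hnoncon m
            · rcases Finset.mem_insert.mp hm with hh | ht
              · exact hh ▸ Finset.mem_insert_self l C
              · exact Finset.mem_insert_of_mem (Finset.mem_of_mem_erase ht)
            · rcases Finset.mem_insert.mp hn with hh | ht
              · exact hh ▸ Finset.mem_insert_self l C
              · exact Finset.mem_insert_of_mem (Finset.mem_of_mem_erase ht)
          · exact hexpre
          · intro m hm
            have hm' := Finset.mem_of_mem_erase hm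
            have hmx : m.1 ≠ x := by
              intro hx
              have hme : m = (x, m.2) := Prod.ext hx rfl
              by_cases hmb : m.2 = b
              · exact Finset.ne_of_mem_erase hm (Prod.ext hx hmb)
              · have hmb' : m.2 = !b := Bool.eq_not_of_ne hmb
                have : m = Lit.negate (x, b) := by
                  simp only [Lit.negate]
                  exact Prod.ext hx hmb'
                exact hconsC (x, b) h1 (this ▸ hm')
            obtain ⟨q', hq'⟩ := hvars m hm'
            refine ⟨q', ?_⟩
            rcases List.mem_cons.mp hq' with hh | ht
            · exact absurd (Prod.ext_iff.mp hh).2 hmx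
            · exact ht
          · intro m hm hall
            have hm' := Finset.mem_of_mem_erase hm
            have hmx : m.1 ≠ x := by
              intro hx
              have hme : m = (x, m.2) := Prod.ext hx rfl
              by_cases hmb : m.2 = b
              · exact Finset.ne_of_mem_erase hm (Prod.ext hx hmb)
              · have hmb' : m.2 = !b := Bool.eq_not_of_ne hmb
                have : m = Lit.negate (x, b) := by
                  simp only [Lit.negate]
                  exact Prod.ext hx hmb'
                exact hconsC (x, b) h1 (this ▸ hm')
            exact before_tail hmx (horder m hm' (List.mem_cons_of_mem _ hall))
          · exact hyp
        by_cases h2 : (x, !b) ∈ C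
        · -- cube dead in this branch
          rw [restrictSet_dead C x b h2] at hyp
          rw [restrictSet_dead (insert l C) x b (Finset.mem_insert_of_mem h2)]
          exact hyp
        · -- cube untouched
          have hne : ∀ m ∈ C, m.1 ≠ x := by
            intro m hm hx
            by_cases hmb : m.2 = b
            · have hme : m = (x, b) := Prod.ext hx hmb
              exact h1 (hme ▸ hm)
            · have hmb' : m.2 = !b := Bool.eq_not_of_ne hmb
              have hme : m = (x, !b) := Prod.ext hx hmb'
              exact h2 (hme ▸ hm)
          have hneI : ∀ m ∈ insert l C, m.1 ≠ x := by
            intro m hm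
            rcases Finset.mem_insert.mp hm with hh | ht
            · rw [hh]; exact fun he => hxl he.symm
            · exact hne m ht
          rw [restrictSet_unchanged C x b hne] at hyp
          rw [restrictSet_unchanged (insert l C) x b hneI]
          apply ih (Cnf.restrict ψ {(x, b)}) C hnodup' hlC hnoncon hexpre
          · intro m hm
            obtain ⟨q', hq'⟩ := hvars m hm
            refine ⟨q', ?_⟩
            rcases List.mem_cons.mp hq' with hh | ht
            · exact absurd (Prod.ext_iff.mp hh).2 (hne m hm)
            · exact ht
          · intro m hm hall
            exact before_tail (hne m hm) (horder m hm (List.mem_cons_of_mem _ hall))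
          · exact hyp
      cases q with
      | ex =>
        rcases h with h | h
        · exact Or.inl (trans true h)
        · exact Or.inr (trans false h)
      | all => exact ⟨trans true h.1, trans false h.2⟩

/-- Soundness of existential reduction for cubes: if disjunctively adding the
non-contradictory cube `C ∪ {l}` to the matrix preserves satisfiability,
where `l` is existential and quantified after all universal literals of `C`,
then disjunctively adding the reduced cube `C` also preserves
satisfiability. -/
theorem existential_reduction_sound
    (pre : QPrefix) (ψ : Cnf) (C : Cube) (l : Lit)
    (hnodup : (pre.map Prod.snd).Nodup)
    (hl : l ∉ C)
    (hnoncontra : ∀ m ∈ insert l C, Lit.negate m ∉ insert l C)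
    (hex : (Quant.ex, l.1) ∈ pre)
    (hvars : ∀ m ∈ C, ∃ q, (q, m.1) ∈ pre)
    (horder : ∀ m ∈ C, (Quant.all, m.1) ∈ pre → before pre m.1 l.1)
    (hvalid : qbfSat pre ψ ↔ qbfSatCubes pre ψ {insert l C}) :
    qbfSat pre ψ ↔ qbfSatCubes pre ψ {C} := by
  constructor
  · intro h
    exact qbfSat_mono pre ψ {C} h
  · intro h
    exact hvalid.mpr (reduce_sound l pre ψ C hnodup hl hnoncontra hex hvars horder h)
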